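/- Let G = (A ∪ B, E) be an edge-weighted bipartite graph with nonnegative weights, and for S ⊆ A let f(S) be the maximum weight of a matching in the induced subgraph G[S ∪ B]. Then f is submodular: f(X) + f(Y) ≥ f(X ∪ Y) + f(X ∩ Y) for all X, Y ⊆ A. -/

import Mathlib

open SimpleGraph Finset

/-- Auxiliary graph whose edges are the union of two edge finsets. -/
private def auxGraph {V : Type} (M N : Finset (Sym2 V)) : SimpleGraph V where
  Adj u v := u ≠ v ∧ (s(u,v) ∈ M ∨ s(u,v) ∈ N)
  symm := by
    constructor
    intro u v h
    refine ⟨h.1.symm, ?_⟩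
    rw [Sym2.eq_swap]
    exact h.2
  loopless := ⟨fun v h => h.1 rfl⟩

/-- Along an alternating path that starts with an `M \ N` edge out of an `A`-vertex,
one can never reach an `A`-vertex `a ∉ Y`. -/
private lemma alt_path_false {V : Type} (G : SimpleGraph V) (A B X Y : Set V)
    (hdisj : Disjoint A B)
    (hbip : ∀ u v : V, G.Adj u v → (u ∈ A ∧ v ∈ B) ∨ (u ∈ B ∧ v ∈ A))
    (M N : Finset (Sym2 V))
    (hME : (↑M : Set (Sym2 V)) ⊆ G.edgeSet) (hNE : (↑N : Set (Sym2 V)) ⊆ G.edgeSet)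
    (hMm : ∀ e ∈ M, ∀ f ∈ M, e ≠ f → ∀ v : V, v ∈ e → v ∉ f)
    (hNm : ∀ e ∈ N, ∀ f ∈ N, e ≠ f → ∀ v : V, v ∈ e → v ∉ f)
    (hNA : ∀ e ∈ N, ∀ v ∈ e, v ∈ A → v ∈ X ∩ Y)
    (a : V) (haA : a ∈ A) (haY : a ∉ Y) :
    ∀ (n : ℕ) (u v : V) (h : (auxGraph M N).Adj u v) (p : (auxGraph M N).Walk v a),
      (SimpleGraph.Walk.cons h p).IsPath → u ∈ A → s(u,v) ∈ M → s(u,v) ∉ N →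
      p.length ≤ n → False := by
  have cross : ∀ x y : V, G.Adj x y → x ∈ A → y ∈ B := by
    intro x y hxy hx
    rcases hbip x y hxy with ⟨_, hb⟩ | ⟨hb, _⟩
    · exact hb
    · exact absurd hx (Set.disjoint_right.mp hdisj hb)
  have cross2 : ∀ x y : V, G.Adj x y → x ∈ B → y ∈ A := by
    intro x y hxy hx
    rcases hbip x y hxy with ⟨ha, _⟩ | ⟨_, ha⟩
    · exact absurd hx (Set.disjoint_left.mp hdisj ha)
    · exact ha
  intro n
  induction n with
  | zero =>
    intro u v h p hp huA heM heN hlen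
    cases p with
    | nil =>
      have hadj : G.Adj u a := (G.mem_edgeSet).mp (hME heM)
      exact Set.disjoint_left.mp hdisj haA (cross u a hadj huA)
    | cons h' q => simp [SimpleGraph.Walk.length_cons] at hlen
  | succ n ih =>
    intro u v h p hp huA heM heN hlen
    cases p with
    | nil =>
      have hadj : G.Adj u a := (G.mem_edgeSet).mp (hME heM)
      exact Set.disjoint_left.mp hdisj haA (cross u a hadj huA)
    | @cons _ v₂ _ h' q =>
      -- h' : auxGraph.Adj v v₂
      have hvB : v ∈ B := cross u v ((G.mem_edgeSet).mp (hME heM)) huA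
      have huv : u ≠ v := h.1
      have hvv₂ : v ≠ v₂ := h'.1
      have hp' : (SimpleGraph.Walk.cons h' q).IsPath ∧
          u ∉ (SimpleGraph.Walk.cons h' q).support :=
        (SimpleGraph.Walk.cons_isPath_iff h _).mp hp
      have huNv₂ : u ≠ v₂ := by
        intro hcon
        apply hp'.2
        rw [SimpleGraph.Walk.support_cons, hcon]
        exact List.mem_cons_of_mem _ q.start_mem_support
      have hef : s(u,v) ≠ s(v,v₂) := by
        intro hcon
        rcases Sym2.eq_iff.mp hcon with ⟨h1, _⟩ | ⟨h1, _⟩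
        · exact huv h1
        · exact huNv₂ h1
      have hfN : s(v,v₂) ∈ N := by
        rcases h'.2 with hf | hf
        · exact absurd (Sym2.mem_mk_left v v₂)
            (hMm _ heM _ hf hef v (Sym2.mem_mk_right u v))
        · exact hf
      have hv₂A : v₂ ∈ A := cross2 v v₂ ((G.mem_edgeSet).mp (hNE hfN)) hvB
      have hv₂XY : v₂ ∈ X ∩ Y := hNA _ hfN v₂ (Sym2.mem_mk_right v v₂) hv₂A
      cases q with
      | nil => exact haY hv₂XY.2
      | @cons _ v₃ _ h'' r =>
        have hvNv₃ : v ≠ v₃ := by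
          intro hcon
          have := hp'.1
          rw [SimpleGraph.Walk.cons_isPath_iff] at this
          apply this.2
          rw [SimpleGraph.Walk.support_cons, hcon]
          exact List.mem_cons_of_mem _ r.start_mem_support
        have hfg : s(v,v₂) ≠ s(v₂,v₃) := by
          intro hcon
          rcases Sym2.eq_iff.mp hcon with ⟨h1, _⟩ | ⟨h1, _⟩
          · exact hvv₂ h1
          · exact hvNv₃ h1
        have hgM : s(v₂,v₃) ∈ M ∧ s(v₂,v₃) ∉ N := by
          have hgNfalse : s(v₂,v₃) ∉ N := by
            intro hg
            exact (hNm _ hfN _ hg hfg v₂ (Sym2.mem_mk_right v v₂)) (Sym2.mem_mk_left v₂ v₃)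
          rcases h''.2 with hg | hg
          · exact ⟨hg, hgNfalse⟩
          · exact absurd hg hgNfalse
        refine ih v₂ v₃ h'' r ?_ hv₂A hgM.1 hgM.2 ?_
        · exact hp'.1.of_cons
        · simp only [SimpleGraph.Walk.length_cons] at hlen
          omega

/-- The exchange lemma: matchings feasible for `X ∪ Y` and `X ∩ Y` can be recombined
into matchings feasible for `X` and `Y` with the same total weight. -/
private lemma exchange {V : Type} (G : SimpleGraph V) (A B X Y : Set V)
    (hdisj : Disjoint A B)
    (hbip : ∀ u v : V, G.Adj u v → (u ∈ A ∧ v ∈ B) ∨ (u ∈ B ∧ v ∈ A))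
    (hX : X ⊆ A) (hY : Y ⊆ A)
    (w : Sym2 V → ℝ)
    (M N : Finset (Sym2 V))
    (hME : (↑M : Set (Sym2 V)) ⊆ G.edgeSet)
    (hMm : ∀ e ∈ M, ∀ f ∈ M, e ≠ f → ∀ v : V, v ∈ e → v ∉ f)
    (hMA : ∀ e ∈ M, ∀ v ∈ e, v ∈ A → v ∈ X ∪ Y)
    (hNE : (↑N : Set (Sym2 V)) ⊆ G.edgeSet)
    (hNm : ∀ e ∈ N, ∀ f ∈ N, e ≠ f → ∀ v : V, v ∈ e → v ∉ f)
    (hNA : ∀ e ∈ N, ∀ v ∈ e, v ∈ A → v ∈ X ∩ Y) :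
    ∃ P Q : Finset (Sym2 V),
      (↑P : Set (Sym2 V)) ⊆ G.edgeSet ∧
      (∀ e ∈ P, ∀ f ∈ P, e ≠ f → ∀ v : V, v ∈ e → v ∉ f) ∧
      (∀ e ∈ P, ∀ v ∈ e, v ∈ A → v ∈ X) ∧
      (↑Q : Set (Sym2 V)) ⊆ G.edgeSet ∧
      (∀ e ∈ Q, ∀ f ∈ Q, e ≠ f → ∀ v : V, v ∈ e → v ∉ f) ∧
      (∀ e ∈ Q, ∀ v ∈ e, v ∈ A → v ∈ Y) ∧
      ∑ e ∈ P, w e + ∑ e ∈ Q, w e = ∑ e ∈ M, w e + ∑ e ∈ N, w e := by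
  classical
  set H := auxGraph M N with hH
  -- a vertex is "bad" if it is connected to an M-matched vertex of `Y \ X`
  set Bad : V → Prop := fun z => ∃ a', a' ∈ Y ∧ a' ∉ X ∧ (∃ e ∈ M, a' ∈ e) ∧
    H.Reachable a' z with hBad
  set BadE : Sym2 V → Prop := fun e => ∃ z ∈ e, Bad z with hBadE
  -- bad-ness propagates across edges of M ∪ N
  have spread : ∀ e : Sym2 V, e ∈ M ∪ N → BadE e → ∀ z ∈ e, Bad z := by
    intro e he hbe z hz
    induction e using Sym2.ind with
    | _ x y =>
      have hedge : (s(x,y) : Sym2 V) ∈ G.edgeSet := by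
        rcases Finset.mem_union.mp he with h | h
        · exact hME h
        · exact hNE h
      have hxy : x ≠ y := by
        intro hcon
        exact G.not_isDiag_of_mem_edgeSet hedge (Sym2.mk_isDiag_iff.mpr hcon)
      have hadj : H.Adj x y := ⟨hxy, by
        rcases Finset.mem_union.mp he with h | h
        · exact Or.inl h
        · exact Or.inr h⟩
      have step : ∀ z1 z2 : V, H.Adj z1 z2 → Bad z1 → Bad z2 := by
        rintro z1 z2 hz12 ⟨a', h1, h2, h3, h4⟩
        exact ⟨a', h1, h2, h3, h4.trans hz12.reachable⟩
      obtain ⟨z', hz'e, hbz'⟩ := hbe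
      rcases Sym2.mem_iff.mp hz'e with rfl | rfl <;>
        rcases Sym2.mem_iff.mp hz with rfl | rfl
      · exact hbz'
      · exact step _ _ hadj hbz'
      · exact step _ _ hadj.symm hbz'
      · exact hbz'
  refine ⟨M.filter (fun e => ¬ BadE e) ∪ N.filter (fun e => BadE e),
          M.filter (fun e => BadE e) ∪ N.filter (fun e => ¬ BadE e),
          ?_, ?_, ?_, ?_, ?_, ?_, ?_⟩
  · -- P ⊆ edgeSet
    intro e he
    rcases Finset.mem_union.mp he with h | h
    · exact hME (Finset.mem_filter.mp h).1
    · exact hNE (Finset.mem_filter.mp h).1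
  · -- P matching
    intro e heP f hfP hne v hve hvf
    rcases Finset.mem_union.mp heP with he | he <;>
      rcases Finset.mem_union.mp hfP with hf | hf <;>
      rw [Finset.mem_filter] at he hf
    · exact hMm e he.1 f hf.1 hne v hve hvf
    · exact he.2 ⟨v, hve, spread f (Finset.mem_union_right _ hf.1) hf.2 v hvf⟩
    · exact hf.2 ⟨v, hvf, spread e (Finset.mem_union_right _ he.1) he.2 v hve⟩
    · exact hNm e he.1 f hf.1 hne v hve hvf
  · -- P feasible for X
    intro e heP v hve hvA
    rcases Finset.mem_union.mp heP with he | he <;> rw [Finset.mem_filter] at he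
    · by_contra hvX
      have hvY : v ∈ Y := by
        rcases hMA e he.1 v hve hvA with h | h
        · exact absurd h hvX
        · exact h
      exact he.2 ⟨v, hve, ⟨v, hvY, hvX, ⟨e, he.1, hve⟩, SimpleGraph.Reachable.refl v⟩⟩
    · exact (hNA e he.1 v hve hvA).1
  · -- Q ⊆ edgeSet
    intro e he
    rcases Finset.mem_union.mp he with h | h
    · exact hME (Finset.mem_filter.mp h).1
    · exact hNE (Finset.mem_filter.mp h).1
  · -- Q matching
    intro e heP f hfP hne v hve hvf
    rcases Finset.mem_union.mp heP with he | he <;>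
      rcases Finset.mem_union.mp hfP with hf | hf <;>
      rw [Finset.mem_filter] at he hf
    · exact hMm e he.1 f hf.1 hne v hve hvf
    · exact hf.2 ⟨v, hvf, spread e (Finset.mem_union_left _ he.1) he.2 v hve⟩
    · exact he.2 ⟨v, hve, spread f (Finset.mem_union_left _ hf.1) hf.2 v hvf⟩
    · exact hNm e he.1 f hf.1 hne v hve hvf
  · -- Q feasible for Y : the hard case, uses the alternating path lemma
    intro e heQ v hve hvA
    rcases Finset.mem_union.mp heQ with he | he <;> rw [Finset.mem_filter] at he
    · by_contra hvY
      have hvX : v ∈ X := by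
        rcases hMA e he.1 v hve hvA with h | h
        · exact h
        · exact absurd h hvY
      -- v is bad: connected to some a' ∈ Y \ X which is M-matched
      have hbv : Bad v := spread e (Finset.mem_union_left _ he.1) he.2 v hve
      obtain ⟨a', ha'Y, ha'X, ⟨e', he'M, ha'e'⟩, hreach⟩ := hbv
      obtain ⟨q0⟩ := hreach
      obtain ⟨pw, hpw⟩ : ∃ p : H.Walk a' v, p.IsPath := ⟨q0.toPath.val, q0.toPath.2⟩
      cases pw with
      | nil => exact ha'X hvX
      | @cons _ z _ h1 q1 =>
        have ha'A : a' ∈ A := hY ha'Y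
        have hfirstM : s(a', z) ∈ M ∧ s(a', z) ∉ N := by
          have hnotN : s(a', z) ∉ N := by
            intro hfN
            exact ha'X (hNA _ hfN a' (Sym2.mem_mk_left a' z) ha'A).1
          rcases h1.2 with hh | hh
          · exact ⟨hh, hnotN⟩
          · exact absurd hh hnotN
        exact alt_path_false G A B X Y hdisj hbip M N hME hNE hMm hNm hNA v hvA hvY
          q1.length a' z h1 q1 hpw ha'A hfirstM.1 hfirstM.2 le_rfl
    · exact (hNA e he.1 v hve hvA).2
  · -- sums agree
    have hdP : Disjoint (M.filter (fun e => ¬ BadE e)) (N.filter (fun e => BadE e)) := by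
      rw [Finset.disjoint_left]
      intro e he hf
      exact (Finset.mem_filter.mp he).2 (Finset.mem_filter.mp hf).2
    have hdQ : Disjoint (M.filter (fun e => BadE e)) (N.filter (fun e => ¬ BadE e)) := by
      rw [Finset.disjoint_left]
      intro e he hf
      exact (Finset.mem_filter.mp hf).2 (Finset.mem_filter.mp he).2
    rw [Finset.sum_union hdP, Finset.sum_union hdQ]
    have h1 := Finset.sum_filter_add_sum_filter_not M (fun e => BadE e) w
    have h2 := Finset.sum_filter_add_sum_filter_not N (fun e => BadE e) w
    linarith

private lemma mmw_setFinite {V : Type} [Fintype V] (G : SimpleGraph V) (A : Set V)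
    (w : Sym2 V → ℝ) (S : Set V) :
    {x : ℝ | ∃ M : Finset (Sym2 V), (↑M : Set (Sym2 V)) ⊆ G.edgeSet ∧
      (∀ e ∈ M, ∀ f ∈ M, e ≠ f → ∀ v : V, v ∈ e → v ∉ f) ∧
      (∀ e ∈ M, ∀ v ∈ e, v ∈ A → v ∈ S) ∧ x = ∑ e ∈ M, w e}.Finite := by
  classical
  apply (Set.finite_range (fun M : Finset (Sym2 V) => ∑ e ∈ M, w e)).subset
  rintro x ⟨M, _, _, _, rfl⟩
  exact ⟨M, rfl⟩

/-- The partial maximum weight matching function: `maxMatchWeight G A w S` is the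
supremum of the total weights of matchings of `G` all of whose endpoints lying in
the part `A` belong to `S` (i.e. matchings of the induced subgraph `G[S ∪ B]`). -/
noncomputable def maxMatchWeight {V : Type} (G : SimpleGraph V) (A : Set V)
    (w : Sym2 V → ℝ) (S : Set V) : ℝ :=
  sSup {x : ℝ | ∃ M : Finset (Sym2 V), (↑M : Set (Sym2 V)) ⊆ G.edgeSet ∧
    (∀ e ∈ M, ∀ f ∈ M, e ≠ f → ∀ v : V, v ∈ e → v ∉ f) ∧
    (∀ e ∈ M, ∀ v ∈ e, v ∈ A → v ∈ S) ∧ x = ∑ e ∈ M, w e}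

private lemma mmw_le {V : Type} [Fintype V] (G : SimpleGraph V) (A : Set V)
    (w : Sym2 V → ℝ) (S : Set V) (M : Finset (Sym2 V))
    (h1 : (↑M : Set (Sym2 V)) ⊆ G.edgeSet)
    (h2 : ∀ e ∈ M, ∀ f ∈ M, e ≠ f → ∀ v : V, v ∈ e → v ∉ f)
    (h3 : ∀ e ∈ M, ∀ v ∈ e, v ∈ A → v ∈ S) :
    ∑ e ∈ M, w e ≤ maxMatchWeight G A w S :=
  le_csSup (mmw_setFinite G A w S).bddAbove ⟨M, h1, h2, h3, rfl⟩

private lemma mmw_exists {V : Type} [Fintype V] (G : SimpleGraph V) (A : Set V)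
    (w : Sym2 V → ℝ) (S : Set V) :
    ∃ M : Finset (Sym2 V), (↑M : Set (Sym2 V)) ⊆ G.edgeSet ∧
      (∀ e ∈ M, ∀ f ∈ M, e ≠ f → ∀ v : V, v ∈ e → v ∉ f) ∧
      (∀ e ∈ M, ∀ v ∈ e, v ∈ A → v ∈ S) ∧
      maxMatchWeight G A w S = ∑ e ∈ M, w e := by
  classical
  have hne : {x : ℝ | ∃ M : Finset (Sym2 V), (↑M : Set (Sym2 V)) ⊆ G.edgeSet ∧
      (∀ e ∈ M, ∀ f ∈ M, e ≠ f → ∀ v : V, v ∈ e → v ∉ f) ∧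
      (∀ e ∈ M, ∀ v ∈ e, v ∈ A → v ∈ S) ∧ x = ∑ e ∈ M, w e}.Nonempty := by
    refine ⟨0, ∅, by simp, by simp, by simp, by simp⟩
  have := hne.csSup_mem (mmw_setFinite G A w S)
  exact this

/-- The partial maximum weight matching function of a bipartite graph with
nonnegative edge weights is submodular. -/
theorem stmt4 {V : Type} [Fintype V] (G : SimpleGraph V) (A B : Set V)
    (hpart : A ∪ B = Set.univ) (hdisj : Disjoint A B)
    (hbip : ∀ u v : V, G.Adj u v → (u ∈ A ∧ v ∈ B) ∨ (u ∈ B ∧ v ∈ A))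
    (w : Sym2 V → ℝ) (hw : ∀ e, 0 ≤ w e)
    (X Y : Set V) (hX : X ⊆ A) (hY : Y ⊆ A) :
    maxMatchWeight G A w X + maxMatchWeight G A w Y ≥
      maxMatchWeight G A w (X ∪ Y) + maxMatchWeight G A w (X ∩ Y) := by
  obtain ⟨M, hME, hMm, hMA, hMval⟩ := mmw_exists G A w (X ∪ Y)
  obtain ⟨N, hNE, hNm, hNA, hNval⟩ := mmw_exists G A w (X ∩ Y)
  obtain ⟨P, Q, hPE, hPm, hPA, hQE, hQm, hQA, hsum⟩ :=
    exchange G A B X Y hdisj hbip hX hY w M N hME hMm hMA hNE hNm hNA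
  have hP := mmw_le G A w X P hPE hPm hPA
  have hQ := mmw_le G A w Y Q hQE hQm hQA
  rw [hMval, hNval]
  linarith
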